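/- The commutative disemigroup Disgp[X] is free on X in the category of commutative disemigroups: for any commutative disemigroup D and any map φ: X → D, there is a unique disemigroup homomorphism Φ: Disgp[X] → D extending φ. -/

import Mathlib

namespace CDi

/-- A "diword": a basis element of the free commutative disemigroup `⌊X⁺⌋₁ ∪ ⌊XX⌋₂`:
a nonempty multiset (commutative word) together with a label `1`, or label `2`
when the word has length `2`. -/
def DiWord (X : Type*) :=
  {p : Multiset X × ℕ // p.1 ≠ 0 ∧ (p.2 = 1 ∨ (p.2 = 2 ∧ Multiset.card p.1 = 2))}

namespace DiWord

variable {X : Type*}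

def word (a : DiWord X) : Multiset X := a.1.1

def lbl (a : DiWord X) : ℕ := a.1.2

theorem word_ne (a : DiWord X) : a.word ≠ 0 := a.2.1

theorem add_word_ne (a b : DiWord X) : a.word + b.word ≠ 0 := by
  intro h
  have h1 := congrArg Multiset.card h
  simp only [Multiset.card_add, Multiset.card_zero] at h1
  have := a.word_ne
  rw [← Multiset.card_pos] at this
  omega

/-- The operation `⊣` on `Disgp[X]`: always produces label 1. -/
def pd (a b : DiWord X) : DiWord X :=
  ⟨(a.word + b.word, 1), add_word_ne a b, Or.inl rfl⟩

/-- The operation `⊢` on `Disgp[X]`: produces label 2 exactly when both factors are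
single letters (total length 2), label 1 otherwise. -/
def pv (a b : DiWord X) : DiWord X :=
  ⟨(a.word + b.word, if Multiset.card (a.word + b.word) = 2 then 2 else 1), by
    refine ⟨add_word_ne a b, ?_⟩
    split_ifs with h
    · exact Or.inr ⟨rfl, h⟩
    · exact Or.inl rfl⟩

/-- `⌊u⌋₁` for a nonempty commutative word `u`. -/
def m1 (u : Multiset X) (h : u ≠ 0) : DiWord X := ⟨(u, 1), h, Or.inl rfl⟩

/-- A single letter `x ∈ X`, i.e. `⌊x⌋₁`. -/
def mX (x : X) : DiWord X := m1 {x} (by simp)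

/-- `⌊xx'⌋₂`. -/
def m2 (x y : X) : DiWord X := ⟨({x, y}, 2), by simp, Or.inr ⟨rfl, by simp⟩⟩

end DiWord


section Free
variable {X D : Type*}

/-- Fold a commutative associative operation over a multiset of letters,
valued in `Option` to handle the empty multiset. -/
def F (q : D → D → D) (hc : ∀ a b, q a b = q b a)
    (ha : ∀ a b c, q (q a b) c = q a (q b c)) (φ : X → D) (u : Multiset X) : Option D :=
  letI : Std.Commutative q := ⟨hc⟩
  letI : Std.Associative q := ⟨ha⟩
  (u.map (fun x => (some (φ x) : Option D))).fold (Option.merge q) none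

variable (q : D → D → D) (hc : ∀ a b, q a b = q b a)
  (ha : ∀ a b c, q (q a b) c = q a (q b c)) (φ : X → D)

theorem F_singleton (x : X) : F q hc ha φ {x} = some (φ x) := by
  letI : Std.Commutative q := ⟨hc⟩
  letI : Std.Associative q := ⟨ha⟩
  show Multiset.fold _ none (Multiset.map _ {x}) = _
  rw [Multiset.map_singleton, Multiset.fold_singleton]
  rfl

theorem F_add (u v : Multiset X) :
    F q hc ha φ (u + v) = Option.merge q (F q hc ha φ u) (F q hc ha φ v) := by
  letI : Std.Commutative q := ⟨hc⟩
  letI : Std.Associative q := ⟨ha⟩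
  show (Multiset.map _ (u + v)).fold _ none = _
  rw [Multiset.map_add]
  exact Multiset.fold_add _ none none _ _

theorem F_isSome (u : Multiset X) (h : u ≠ 0) : (F q hc ha φ u).isSome := by
  obtain ⟨x, hx⟩ := Multiset.exists_mem_of_ne_zero h
  obtain ⟨s, rfl⟩ := Multiset.exists_cons_of_mem hx
  rw [← Multiset.singleton_add, F_add, F_singleton]
  cases F q hc ha φ s <;> simp [Option.merge]

/-- The total fold on nonempty multisets. -/
def g (u : Multiset X) (h : u ≠ 0) : D := (F q hc ha φ u).get (F_isSome q hc ha φ u h)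

theorem g_singleton (x : X) : g q hc ha φ {x} (by simp) = φ x := by
  have := F_singleton q hc ha φ x
  apply Option.some_injective
  rw [g, Option.some_get, this]

theorem g_add (u v : Multiset X) (hu : u ≠ 0) (hv : v ≠ 0) (huv : u + v ≠ 0) :
    g q hc ha φ (u + v) huv = q (g q hc ha φ u hu) (g q hc ha φ v hv) := by
  apply Option.some_injective
  rw [g, Option.some_get, F_add]
  have h1 : F q hc ha φ u = some (g q hc ha φ u hu) := (Option.some_get _).symm
  have h2 : F q hc ha φ v = some (g q hc ha φ v hv) := (Option.some_get _).symm
  rw [h1, h2]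
  rfl

theorem g_congr {u v : Multiset X} (h : u = v) (hu : u ≠ 0) (hv : v ≠ 0) :
    g q hc ha φ u hu = g q hc ha φ v hv := by subst h; rfl

theorem g_decomp (u : Multiset X) (h : u ≠ 0) (h2 : 2 ≤ Multiset.card u) :
    ∃ p r, g q hc ha φ u h = q p r := by
  obtain ⟨x, hx⟩ := Multiset.exists_mem_of_ne_zero h
  obtain ⟨s, rfl⟩ := Multiset.exists_cons_of_mem hx
  have hs : s ≠ 0 := by
    intro hs0
    simp [hs0] at h2
  have he : ({x} : Multiset X) + s = x ::ₘ s := Multiset.singleton_add x s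
  have hns : ({x} : Multiset X) + s ≠ 0 := he ▸ h
  have := g_add q hc ha φ {x} s (by simp) hs hns
  exact ⟨_, _, (g_congr q hc ha φ he.symm h hns).trans this⟩

/-- The candidate universal map. -/
def Phi (qv qd : D → D → D)
    (hv_comm : ∀ a b : D, qv a b = qv b a)
    (hv_assoc : ∀ a b c : D, qv (qv a b) c = qv a (qv b c))
    (hd_comm : ∀ a b : D, qd a b = qd b a)
    (hd_assoc : ∀ a b c : D, qd (qd a b) c = qd a (qd b c))
    (φ : X → D) (a : DiWord X) : D :=
  if a.lbl = 2 then g qv hv_comm hv_assoc φ a.word a.word_ne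
  else g qd hd_comm hd_assoc φ a.word a.word_ne

end Free


/-- `Disgp[X]` is the free commutative disemigroup on `X`: for any commutative
disemigroup `(D, qv, qd)` and any map `φ : X → D`, there is a unique disemigroup
homomorphism `Φ : Disgp[X] → D` extending `φ`. -/
theorem disgp_free {X D : Type*} (qv qd : D → D → D)
    (hv_comm : ∀ a b : D, qv a b = qv b a)
    (hd_comm : ∀ a b : D, qd a b = qd b a)
    (hv_assoc : ∀ a b c : D, qv (qv a b) c = qv a (qv b c))
    (hd_assoc : ∀ a b c : D, qd (qd a b) c = qd a (qd b c))
    (ax1 : ∀ a b c : D, qd a (qv b c) = qd a (qd b c))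
    (ax2 : ∀ a b c : D, qv (qd a b) c = qv (qv a b) c)
    (ax3 : ∀ a b c : D, qv a (qd b c) = qd (qv a b) c)
    (φ : X → D) :
    ∃! Φ : DiWord X → D,
      (∀ x : X, Φ (DiWord.mX x) = φ x) ∧
      (∀ a b : DiWord X, Φ (DiWord.pv a b) = qv (Φ a) (Φ b)) ∧
      (∀ a b : DiWord X, Φ (DiWord.pd a b) = qd (Φ a) (Φ b)) := by
  classical
  set Gd : ∀ u : Multiset X, u ≠ 0 → D := g qd hd_comm hd_assoc φ with hGd
  set Gv : ∀ u : Multiset X, u ≠ 0 → D := g qv hv_comm hv_assoc φ with hGv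
  set Φ : DiWord X → D := Phi qv qd hv_comm hv_assoc hd_comm hd_assoc φ with hΦdef
  -- derived algebraic identities
  have L1 : ∀ a b c : D, qv a (qd b c) = qd a (qd b c) := by
    intro a b c
    rw [ax3, hd_comm, ax1, hd_comm, hd_assoc]
  have L2 : ∀ a b c : D, qv a (qv b c) = qd a (qd b c) := by
    intro a b c
    rw [hv_comm, ← ax2, hv_comm, L1]
  -- basic facts about labels and cards
  have card_pos : ∀ a : DiWord X, 1 ≤ Multiset.card a.word := by
    intro a
    have := a.word_ne
    rw [← Multiset.card_pos] at this
    omega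
  have lbl2_card : ∀ a : DiWord X, a.lbl = 2 → Multiset.card a.word = 2 := by
    intro a h
    rcases a.2.2 with h1 | h1
    · rw [DiWord.lbl] at h; omega
    · exact h1.2
  have lbl_one : ∀ a : DiWord X, a.lbl ≠ 2 → a.lbl = 1 := by
    intro a h
    rcases a.2.2 with h1 | h1
    · exact h1
    · exact absurd h1.1 h
  -- value of Φ on a label-2 element
  have phi_two : ∀ a : DiWord X, a.lbl = 2 → ∃ x y : X,
      a.word = {x} + {y} ∧ Φ a = qv (φ x) (φ y) ∧
      Gd a.word a.word_ne = qd (φ x) (φ y) := by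
    intro a h2
    obtain ⟨x, y, hxy⟩ := Multiset.card_eq_two.mp (lbl2_card a h2)
    have hw : a.word = {x} + {y} := by rw [hxy, Multiset.insert_eq_cons, Multiset.singleton_add]
    have hone : ({x} : Multiset X) ≠ 0 := by simp
    have hone' : ({y} : Multiset X) ≠ 0 := by simp
    have hsum : ({x} : Multiset X) + {y} ≠ 0 := hw ▸ a.word_ne
    refine ⟨x, y, hw, ?_, ?_⟩
    · show Phi qv qd hv_comm hv_assoc hd_comm hd_assoc φ a = _
      rw [Phi, if_pos h2,
        g_congr qv hv_comm hv_assoc φ hw a.word_ne hsum,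
        g_add qv hv_comm hv_assoc φ {x} {y} hone hone' hsum,
        g_singleton, g_singleton]
    · rw [hGd, g_congr qd hd_comm hd_assoc φ hw a.word_ne hsum,
        g_add qd hd_comm hd_assoc φ {x} {y} hone hone' hsum,
        g_singleton, g_singleton]
  have phi_one : ∀ a : DiWord X, a.lbl ≠ 2 → Φ a = Gd a.word a.word_ne := by
    intro a h
    show Phi qv qd hv_comm hv_assoc hd_comm hd_assoc φ a = _
    rw [Phi, if_neg h, hGd]
  -- bridge: under qd, Φ a is interchangeable with the pure-qd fold
  have bridge : ∀ (a : DiWord X) (d : D), qd (Φ a) d = qd (Gd a.word a.word_ne) d := by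
    intro a d
    by_cases h2 : a.lbl = 2
    · obtain ⟨x, y, _, hA, hB⟩ := phi_two a h2
      rw [hA, hB, hd_comm, ax1, hd_comm]
    · rw [phi_one a h2]
  -- composite elements: qv collapses to qd
  have vd : ∀ a : DiWord X, 2 ≤ Multiset.card a.word →
      ∀ d : D, qv (Φ a) d = qd (Φ a) d := by
    intro a hcard d
    by_cases h2 : a.lbl = 2
    · obtain ⟨x, y, _, hA, _⟩ := phi_two a h2
      rw [hA, hv_comm, L2, hd_comm (qv (φ x) (φ y)) d, ax1]
    · rw [phi_one a h2]
      obtain ⟨p, r, hpr⟩ := g_decomp qd hd_comm hd_assoc φ a.word a.word_ne hcard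
      rw [hGd, hpr, hv_comm, L1, hd_comm]
  -- value of Φ on single letters
  have hmX : ∀ x : X, Φ (DiWord.mX x) = φ x := by
    intro x
    have : (DiWord.mX x).lbl ≠ 2 := by
      show (1:ℕ) ≠ 2; norm_num
    rw [phi_one _ this]
    exact g_singleton qd hd_comm hd_assoc φ x
  -- Φ is a ⊣-homomorphism
  have hpd : ∀ a b : DiWord X, Φ (DiWord.pd a b) = qd (Φ a) (Φ b) := by
    intro a b
    have hl : (DiWord.pd a b).lbl ≠ 2 := by show (1:ℕ) ≠ 2; norm_num
    have hw : (DiWord.pd a b).word = a.word + b.word := rfl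
    calc Φ (DiWord.pd a b)
        = Gd (a.word + b.word) (DiWord.add_word_ne a b) := by
          rw [phi_one _ hl]
          exact g_congr qd hd_comm hd_assoc φ hw _ _
      _ = qd (Gd a.word a.word_ne) (Gd b.word b.word_ne) :=
          g_add qd hd_comm hd_assoc φ _ _ a.word_ne b.word_ne _
      _ = qd (Gd b.word b.word_ne) (Gd a.word a.word_ne) := hd_comm _ _
      _ = qd (Φ b) (Gd a.word a.word_ne) := (bridge b _).symm
      _ = qd (Φ a) (Φ b) := by rw [hd_comm, bridge a]
  -- Φ is a ⊢-homomorphism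
  have hpv : ∀ a b : DiWord X, Φ (DiWord.pv a b) = qv (Φ a) (Φ b) := by
    intro a b
    have hw : (DiWord.pv a b).word = a.word + b.word := rfl
    by_cases hn : Multiset.card (a.word + b.word) = 2
    · -- both are single letters
      have hca : Multiset.card a.word = 1 := by
        have := card_pos a; have := card_pos b
        rw [Multiset.card_add] at hn; omega
      have hcb : Multiset.card b.word = 1 := by
        have := card_pos a; have := card_pos b
        rw [Multiset.card_add] at hn; omega
      obtain ⟨x, hx⟩ := Multiset.card_eq_one.mp hca
      obtain ⟨y, hy⟩ := Multiset.card_eq_one.mp hcb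
      have hla : a.lbl ≠ 2 := fun h => by
        have := lbl2_card a h; omega
      have hlb : b.lbl ≠ 2 := fun h => by
        have := lbl2_card b h; omega
      have hl2 : (DiWord.pv a b).lbl = 2 := by
        show (if Multiset.card (a.word + b.word) = 2 then 2 else 1) = 2
        rw [if_pos hn]
      have hsum : ({x} : Multiset X) + {y} ≠ 0 := by simp
      have hΦab : Φ (DiWord.pv a b) = qv (φ x) (φ y) := by
        show Phi qv qd hv_comm hv_assoc hd_comm hd_assoc φ _ = _
        rw [Phi, if_pos hl2,
          g_congr qv hv_comm hv_assoc φ (show (DiWord.pv a b).word = {x} + {y} by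
            rw [hw, hx, hy]) _ hsum,
          g_add qv hv_comm hv_assoc φ {x} {y} (by simp) (by simp) hsum,
          g_singleton, g_singleton]
      have hΦa : Φ a = φ x := by
        rw [phi_one a hla, hGd,
          g_congr qd hd_comm hd_assoc φ hx a.word_ne (by simp), g_singleton]
      have hΦb : Φ b = φ y := by
        rw [phi_one b hlb, hGd,
          g_congr qd hd_comm hd_assoc φ hy b.word_ne (by simp), g_singleton]
      rw [hΦab, hΦa, hΦb]
    · -- total length at least 3
      have hl : (DiWord.pv a b).lbl ≠ 2 := by
        show (if Multiset.card (a.word + b.word) = 2 then 2 else 1) ≠ 2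
        rw [if_neg hn]; norm_num
      have hqd : Φ (DiWord.pv a b) = qd (Φ a) (Φ b) := by
        calc Φ (DiWord.pv a b)
            = Gd (a.word + b.word) (DiWord.add_word_ne a b) := by
              rw [phi_one _ hl]
              exact g_congr qd hd_comm hd_assoc φ hw _ _
          _ = qd (Gd a.word a.word_ne) (Gd b.word b.word_ne) :=
              g_add qd hd_comm hd_assoc φ _ _ a.word_ne b.word_ne _
          _ = qd (Gd b.word b.word_ne) (Gd a.word a.word_ne) := hd_comm _ _
          _ = qd (Φ b) (Gd a.word a.word_ne) := (bridge b _).symm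
          _ = qd (Φ a) (Φ b) := by rw [hd_comm, bridge a]
      rw [hqd]
      -- now show qd (Φ a) (Φ b) = qv (Φ a) (Φ b)
      by_cases hca : 2 ≤ Multiset.card a.word
      · exact (vd a hca _).symm
      · have hcb : 2 ≤ Multiset.card b.word := by
          have := card_pos a; have := card_pos b
          rw [Multiset.card_add] at hn; omega
        rw [hd_comm, ← vd b hcb, hv_comm]
  refine ⟨Φ, ⟨hmX, hpv, hpd⟩, ?_⟩
  rintro Ψ ⟨h1, h2, h3⟩
  funext a
  suffices key : ∀ n (a : DiWord X), Multiset.card a.word = n → Ψ a = Φ a from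
    key _ a rfl
  intro n
  induction n using Nat.strong_induction_on with
  | _ n ih =>
    intro a hn
    by_cases hl : a.lbl = 2
    · -- a = ⌊xy⌋₂ = mX x ⊢ mX y
      obtain ⟨x, y, hxy⟩ := Multiset.card_eq_two.mp (lbl2_card a hl)
      have ha : a = DiWord.pv (DiWord.mX x) (DiWord.mX y) := by
        apply Subtype.ext
        have hword : (DiWord.pv (DiWord.mX x) (DiWord.mX y)).word = {x, y} := by
          show ({x} : Multiset X) + {y} = {x, y}
          rw [Multiset.singleton_add, Multiset.insert_eq_cons]
        have hlbl : (DiWord.pv (DiWord.mX x) (DiWord.mX y)).lbl = 2 := by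
          show (if Multiset.card (({x} : Multiset X) + {y}) = 2 then 2 else 1) = 2
          rw [if_pos (by simp)]
        refine Prod.ext ?_ ?_
        · exact hxy.trans hword.symm
        · exact hl.trans hlbl.symm
      rw [ha, h2, hpv, h1, h1, hmX, hmX]
    · -- a = ⌊u⌋₁
      obtain ⟨x, hx⟩ := Multiset.exists_mem_of_ne_zero a.word_ne
      obtain ⟨s, hxs⟩ := Multiset.exists_cons_of_mem hx
      have hl1 : a.lbl = 1 := lbl_one a hl
      by_cases hs : s = 0
      · -- a is a single letter
        have ha : a = DiWord.mX x := by
          apply Subtype.ext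
          refine Prod.ext ?_ ?_
          · show a.word = ({x} : Multiset X)
            rw [hxs, hs]
            rfl
          · exact hl1
        rw [ha, h1, hmX]
      · -- a = mX x ⊣ m1 s
        have ha : a = DiWord.pd (DiWord.mX x) (DiWord.m1 s hs) := by
          apply Subtype.ext
          refine Prod.ext ?_ ?_
          · show a.word = ({x} : Multiset X) + s
            rw [hxs, Multiset.singleton_add]
          · exact hl1
        have hcs : Multiset.card (DiWord.m1 s hs).word < n := by
          have : Multiset.card a.word = Multiset.card s + 1 := by
            rw [hxs]; simp
          show Multiset.card s < n
          omega
        rw [ha, h3, hpd, h1, hmX, ih _ hcs _ rfl]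


end CDi
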